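/- arXiv:0804.0557 — 2 statements merged into one kernel-verified Lean document; each statement's English description precedes it below -/
import Mathlib

section
/- Let α₁, α₂ ∈ ℂ with 0 < |α₁| < 1 and 0 < |α₂| < 1, and let M = ℂ² \ {(0,0)} with the ℤ-action n · (z₁, z₂) = (α₁ⁿ z₁, α₂ⁿ z₂). The quotient topological space M/ℤ (with the quotient topology) is compact and Hausdorff. -/
/-- The orbit relation of the `ℤ`-action `n • (z₁, z₂) = (α₁ ^ n * z₁, α₂ ^ n * z₂)`
on `M = ℂ² \ {0}` (realized as the subtype of nonzero points of `ℂ × ℂ`). -/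
def hopfRel (α₁ α₂ : ℂ) (p q : {z : ℂ × ℂ // z ≠ 0}) : Prop :=
  ∃ n : ℤ, (α₁ ^ n * p.val.1, α₂ ^ n * p.val.2) = q.val

namespace HopfAux

/-- `M = ℂ² \ {0}`. -/
abbrev M := {z : ℂ × ℂ // z ≠ 0}

/-- zpow monotonicity in the base, nonneg exponent. -/
lemma zpow_le_zpow_base {a b : ℝ} (ha : 0 < a) (hab : a ≤ b) {n : ℤ} (hn : 0 ≤ n) :
    a ^ n ≤ b ^ n := by
  lift n to ℕ using hn
  rw [zpow_natCast, zpow_natCast]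
  exact pow_le_pow_left₀ ha.le hab _

/-- zpow antitonicity in the base, nonpos exponent. -/
lemma zpow_le_zpow_base_neg {a b : ℝ} (ha : 0 < a) (hab : a ≤ b) {n : ℤ} (hn : n ≤ 0) :
    b ^ n ≤ a ^ n := by
  have hb : 0 < b := ha.trans_le hab
  obtain ⟨m, rfl⟩ : ∃ m : ℕ, n = -(m : ℤ) := ⟨(-n).toNat, by omega⟩
  rw [zpow_neg, zpow_neg]
  exact inv_anti₀ (zpow_pos ha _) (zpow_le_zpow_base ha hab (by positivity))

variable (α₁ α₂ : ℂ)

/-- The basic map on `ℂ × ℂ`. -/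
noncomputable def hsmul (n : ℤ) (z : ℂ × ℂ) : ℂ × ℂ := (α₁ ^ n * z.1, α₂ ^ n * z.2)

lemma hsmul_ne_zero (hα₁ : α₁ ≠ 0) (hα₂ : α₂ ≠ 0) (n : ℤ) {z : ℂ × ℂ} (hz : z ≠ 0) :
    hsmul α₁ α₂ n z ≠ 0 := by
  intro h
  apply hz
  have h1 : α₁ ^ n * z.1 = 0 := congrArg Prod.fst h
  have h2 : α₂ ^ n * z.2 = 0 := congrArg Prod.snd h
  have hz1 : z.1 = 0 := by
    rcases mul_eq_zero.1 h1 with h | h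
    · exact absurd h (zpow_ne_zero n hα₁)
    · exact h
  have hz2 : z.2 = 0 := by
    rcases mul_eq_zero.1 h2 with h | h
    · exact absurd h (zpow_ne_zero n hα₂)
    · exact h
  exact Prod.ext hz1 hz2

lemma norm_hsmul (n : ℤ) (z : ℂ × ℂ) :
    ‖hsmul α₁ α₂ n z‖ = max (‖α₁‖ ^ n * ‖z.1‖) (‖α₂‖ ^ n * ‖z.2‖) := by
  simp [hsmul, Prod.norm_def, map_mul, map_zpow₀]

lemma norm_hsmul_le (n : ℤ) (z : ℂ × ℂ) :
    ‖hsmul α₁ α₂ n z‖ ≤ max (‖α₁‖ ^ n) (‖α₂‖ ^ n) * ‖z‖ := by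
  rw [norm_hsmul, Prod.norm_def]
  have h1 : ‖α₁‖ ^ n * ‖z.1‖ ≤
      max (‖α₁‖ ^ n) (‖α₂‖ ^ n) * max ‖z.1‖ ‖z.2‖ :=
    mul_le_mul (le_max_left _ _) (le_max_left _ _) (norm_nonneg _)
      (le_trans (by positivity) (le_max_left _ _))
  have h2 : ‖α₂‖ ^ n * ‖z.2‖ ≤
      max (‖α₁‖ ^ n) (‖α₂‖ ^ n) * max ‖z.1‖ ‖z.2‖ :=
    mul_le_mul (le_max_right _ _) (le_max_right _ _) (norm_nonneg _)
      (le_trans (by positivity) (le_max_left _ _))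
  exact max_le h1 h2

lemma le_norm_hsmul (h₁ : 0 < ‖α₁‖) (h₂ : 0 < ‖α₂‖) (n : ℤ) (z : ℂ × ℂ) :
    min (‖α₁‖ ^ n) (‖α₂‖ ^ n) * ‖z‖ ≤ ‖hsmul α₁ α₂ n z‖ := by
  rw [norm_hsmul, Prod.norm_def]
  rcases max_cases ‖z.1‖ ‖z.2‖ with ⟨hm, _⟩ | ⟨hm, _⟩
  · rw [hm]
    exact le_max_of_le_left (mul_le_mul_of_nonneg_right (min_le_left _ _) (norm_nonneg _))
  · rw [hm]
    exact le_max_of_le_right (mul_le_mul_of_nonneg_right (min_le_right _ _) (norm_nonneg _))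

end HopfAux

open HopfAux in
/-- For `0 < |α₁| < 1` and `0 < |α₂| < 1`, the quotient topological
space `M/ℤ` (with the quotient topology) is compact and Hausdorff. -/
theorem hopf_quotient_compact_t2
    (α₁ α₂ : ℂ)
    (h₁ : 0 < ‖α₁‖) (h₁' : ‖α₁‖ < 1)
    (h₂ : 0 < ‖α₂‖) (h₂' : ‖α₂‖ < 1) :
    CompactSpace (Quot (hopfRel α₁ α₂)) ∧ T2Space (Quot (hopfRel α₁ α₂)) := by
  have hα₁ : α₁ ≠ 0 := by simpa using h₁.ne'
  have hα₂ : α₂ ≠ 0 := by simpa using h₂.ne'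
  set a₁ := ‖α₁‖ with ha₁
  set a₂ := ‖α₂‖ with ha₂
  set c : ℝ := max a₁ a₂ with hc
  set d : ℝ := min a₁ a₂ with hd
  have hc0 : 0 < c := lt_max_of_lt_left h₁
  have hc1 : c < 1 := max_lt h₁' h₂'
  have hd0 : 0 < d := lt_min h₁ h₂
  have hd1 : d < 1 := min_lt_of_left_lt h₁'
  -- the ℤ-action on M
  letI : VAdd ℤ M := ⟨fun n z => ⟨hsmul α₁ α₂ n z.val, hsmul_ne_zero α₁ α₂ hα₁ hα₂ n z.2⟩⟩
  have vadd_val : ∀ (n : ℤ) (z : M), (n +ᵥ z).val = hsmul α₁ α₂ n z.val := fun _ _ => rfl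
  letI : AddAction ℤ M :=
    { zero_vadd := fun z => by
        apply Subtype.ext
        show hsmul α₁ α₂ 0 z.val = z.val
        simp [hsmul]
      add_vadd := fun m n z => by
        apply Subtype.ext
        show hsmul α₁ α₂ (m + n) z.val = hsmul α₁ α₂ m (hsmul α₁ α₂ n z.val)
        simp [hsmul, zpow_add₀ hα₁, zpow_add₀ hα₂, mul_assoc] }
  -- key norm bounds
  have upper : ∀ (n : ℤ), 0 ≤ n → ∀ z : ℂ × ℂ, ‖hsmul α₁ α₂ n z‖ ≤ c ^ n * ‖z‖ := by
    intro n hn z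
    refine (norm_hsmul_le α₁ α₂ n z).trans (mul_le_mul_of_nonneg_right ?_ (norm_nonneg _))
    exact max_le (zpow_le_zpow_base h₁ (le_max_left _ _) hn)
      (zpow_le_zpow_base h₂ (le_max_right _ _) hn)
  have lower : ∀ (n : ℤ), n ≤ 0 → ∀ z : ℂ × ℂ, c ^ n * ‖z‖ ≤ ‖hsmul α₁ α₂ n z‖ := by
    intro n hn z
    refine le_trans (mul_le_mul_of_nonneg_right ?_ (norm_nonneg _)) (le_norm_hsmul α₁ α₂ h₁ h₂ n z)
    exact le_min (zpow_le_zpow_base_neg h₁ (le_max_left _ _) hn)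
      (zpow_le_zpow_base_neg h₂ (le_max_right _ _) hn)
  have lower_one : ∀ z : ℂ × ℂ, d * ‖z‖ ≤ ‖hsmul α₁ α₂ 1 z‖ := by
    intro z
    have := le_norm_hsmul α₁ α₂ h₁ h₂ 1 z
    simpa using this
  have hsmul_add : ∀ (m k : ℤ) (z : ℂ × ℂ),
      hsmul α₁ α₂ (m + k) z = hsmul α₁ α₂ m (hsmul α₁ α₂ k z) := by
    intro m k z
    simp [hsmul, zpow_add₀ hα₁, zpow_add₀ hα₂, mul_assoc]
  -- the relation agrees with the orbit relation
  have rel_eq : hopfRel α₁ α₂ = (AddAction.orbitRel ℤ M).r := by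
    funext p q
    show (∃ n : ℤ, (α₁ ^ n * p.val.1, α₂ ^ n * p.val.2) = q.val) = (p ∈ AddAction.orbit ℤ q)
    rw [eq_iff_iff]
    constructor
    · rintro ⟨n, hn⟩
      refine ⟨-n, ?_⟩
      apply Subtype.ext
      rw [vadd_val, ← hn]
      show hsmul α₁ α₂ (-n) (hsmul α₁ α₂ n p.val) = p.val
      simp [hsmul, ← mul_assoc, inv_mul_cancel₀ (zpow_ne_zero n hα₁), inv_mul_cancel₀ (zpow_ne_zero n hα₂)]
    · rintro ⟨n, hn⟩
      refine ⟨-n, ?_⟩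
      have := congrArg Subtype.val hn
      rw [vadd_val] at this
      rw [← this]
      show hsmul α₁ α₂ (-n) (hsmul α₁ α₂ n q.val) = q.val
      simp [hsmul, ← mul_assoc, inv_mul_cancel₀ (zpow_ne_zero n hα₁), inv_mul_cancel₀ (zpow_ne_zero n hα₂)]
  -- continuity of the action
  letI : ContinuousConstVAdd ℤ M := by
    constructor
    intro n
    apply Continuous.subtype_mk
    exact ((continuous_const.mul (continuous_fst.comp continuous_subtype_val)).prodMk
      (continuous_const.mul (continuous_snd.comp continuous_subtype_val)))
  -- proper discontinuity
  letI : ProperlyDiscontinuousVAdd ℤ M := by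
    constructor
    intro K L hK hL
    rcases K.eq_empty_or_nonempty with rfl | hKne
    · simp
    rcases L.eq_empty_or_nonempty with rfl | hLne
    · simp
    -- extreme values of the norm on K and L
    have hcont : Continuous fun z : M => ‖z.val‖ := continuous_subtype_val.norm
    obtain ⟨zK, -, hminK⟩ := hK.exists_isMinOn hKne hcont.continuousOn
    obtain ⟨wK, -, hmaxK⟩ := hK.exists_isMaxOn hKne hcont.continuousOn
    obtain ⟨zL, -, hminL⟩ := hL.exists_isMinOn hLne hcont.continuousOn
    obtain ⟨wL, -, hmaxL⟩ := hL.exists_isMaxOn hLne hcont.continuousOn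
    set aK : ℝ := ‖zK.val‖ with haK
    set bK : ℝ := ‖wK.val‖ with hbK
    set aL : ℝ := ‖zL.val‖ with haL
    set bL : ℝ := ‖wL.val‖ with hbL
    have haK0 : 0 < aK := norm_pos_iff.2 zK.2
    have hbK0 : 0 < bK := norm_pos_iff.2 wK.2
    have haL0 : 0 < aL := norm_pos_iff.2 zL.2
    have hbL0 : 0 < bL := norm_pos_iff.2 wL.2
    obtain ⟨N, hN⟩ := exists_pow_lt_of_lt_one (div_pos haL0 hbK0) hc1
    obtain ⟨N', hN'⟩ := exists_pow_lt_of_lt_one (div_pos haK0 hbL0) hc1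
    have hNb : c ^ N * bK < aL := (lt_div_iff₀ hbK0).mp hN
    have hN'b : c ^ N' * bL < aK := (lt_div_iff₀ hbL0).mp hN'
    apply Set.Finite.subset (Set.finite_Icc (-(N' : ℤ)) (N : ℤ))
    intro γ hγ
    obtain ⟨w, ⟨z, hzK, rfl⟩, hwL⟩ := hγ
    have hz0 : 0 < ‖z.val‖ := norm_pos_iff.2 z.2
    have hzb : ‖z.val‖ ≤ bK := hmaxK hzK
    have hza : aK ≤ ‖z.val‖ := hminK hzK
    have hwb : ‖(γ +ᵥ z).val‖ ≤ bL := hmaxL hwL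
    have hwa : aL ≤ ‖(γ +ᵥ z).val‖ := hminL hwL
    rw [vadd_val] at hwb hwa
    constructor
    · -- lower bound  -N' ≤ γ
      by_contra hlt
      push_neg at hlt
      have hγle : γ ≤ 0 := by omega
      have h1 : c ^ γ * ‖z.val‖ ≤ bL := (lower γ hγle z.val).trans hwb
      have h2 : c ^ (-(N' : ℤ)) ≤ c ^ γ :=
        zpow_le_zpow_right_of_le_one₀ hc0 hc1.le (by omega)
      have h3 : c ^ (-(N' : ℤ)) * aK ≤ bL :=
        le_trans (mul_le_mul h2 hza haK0.le (zpow_pos hc0 _).le) h1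
      rw [zpow_neg, zpow_natCast] at h3
      have h4 : aK ≤ c ^ N' * bL := by
        have hp : (0:ℝ) < c ^ N' := pow_pos hc0 _
        calc aK = c ^ N' * ((c ^ N')⁻¹ * aK) := by field_simp
          _ ≤ c ^ N' * bL := mul_le_mul_of_nonneg_left h3 hp.le
      linarith
    · -- upper bound  γ ≤ N
      by_contra hlt
      push_neg at hlt
      have hγge : 0 ≤ γ := by omega
      have h1 : aL ≤ c ^ γ * ‖z.val‖ := hwa.trans (upper γ hγge z.val)
      have h2 : c ^ γ ≤ c ^ (N : ℤ) :=
        zpow_le_zpow_right_of_le_one₀ hc0 hc1.le (by omega)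
      have h3 : aL ≤ c ^ (N : ℤ) * bK :=
        h1.trans (mul_le_mul h2 hzb hz0.le (zpow_pos hc0 _).le)
      rw [zpow_natCast] at h3
      linarith
  constructor
  · -- compactness
    -- the fundamental annulus
    set S' : Set (ℂ × ℂ) := Metric.closedBall 0 1 ∩ {z | d ≤ ‖z‖} with hS'
    have hS'comp : IsCompact S' :=
      (isCompact_closedBall 0 1).inter_right (isClosed_le continuous_const continuous_norm)
    set K : Set M := Subtype.val ⁻¹' S' with hKdef
    have hKcomp : IsCompact K := by
      rw [Subtype.isCompact_iff]
      have himg : Subtype.val '' K = S' := by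
        ext w
        constructor
        · rintro ⟨⟨w', hw'⟩, hmem, rfl⟩; exact hmem
        · intro hw
          have hw0 : w ≠ 0 := by
            intro h
            have : d ≤ ‖w‖ := hw.2
            rw [h] at this
            simp at this
            linarith
          exact ⟨⟨w, hw0⟩, hw, rfl⟩
      rw [himg]
      exact hS'comp
    -- every orbit meets K
    have hmeets : ∀ z : M, ∃ n : ℤ, (n +ᵥ z) ∈ K := by
      intro z
      have hz0 : 0 < ‖z.val‖ := norm_pos_iff.2 z.2
      set P : ℤ → Prop := fun n => ‖hsmul α₁ α₂ n z.val‖ ≤ 1 with hP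
      have hPinh : ∃ n, P n := by
        obtain ⟨N, hN⟩ := exists_pow_lt_of_lt_one (by positivity : (0:ℝ) < 1 / ‖z.val‖) hc1
        refine ⟨(N : ℤ), ?_⟩
        have := upper (N : ℤ) (by positivity) z.val
        rw [zpow_natCast] at this
        have h2 : c ^ N * ‖z.val‖ < 1 := by
          rw [lt_div_iff₀ hz0] at hN
          linarith
        exact this.trans h2.le
      have hPbdd : ∃ b : ℤ, ∀ n : ℤ, P n → b ≤ n := by
        obtain ⟨N', hN'⟩ := exists_pow_lt_of_lt_one hz0 hc1
        refine ⟨-(N' : ℤ), fun n hn => ?_⟩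
        by_contra hlt
        push_neg at hlt
        have hγle : n ≤ 0 := by omega
        have h1 : c ^ n * ‖z.val‖ ≤ 1 := (lower n hγle z.val).trans hn
        have h2 : c ^ (-(N' : ℤ)) ≤ c ^ n :=
          zpow_le_zpow_right_of_le_one₀ hc0 hc1.le (by omega)
        have h3 : c ^ (-(N' : ℤ)) * ‖z.val‖ ≤ 1 :=
          le_trans (mul_le_mul_of_nonneg_right h2 hz0.le) h1
        rw [zpow_neg, zpow_natCast] at h3
        have hp : (0:ℝ) < c ^ N' := pow_pos hc0 _
        have h4 : ‖z.val‖ ≤ c ^ N' := by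
          calc ‖z.val‖ = c ^ N' * ((c ^ N')⁻¹ * ‖z.val‖) := by field_simp
            _ ≤ c ^ N' * 1 := mul_le_mul_of_nonneg_left h3 hp.le
            _ = c ^ N' := mul_one _
        linarith
      obtain ⟨n, hn, hleast⟩ := Int.exists_least_of_bdd hPbdd hPinh
      refine ⟨n, ?_⟩
      have hprev : ¬ P (n - 1) := fun h => by have := hleast _ h; omega
      have hprev' : 1 < ‖hsmul α₁ α₂ (n - 1) z.val‖ := lt_of_not_ge hprev
      have hdle : d ≤ ‖hsmul α₁ α₂ n z.val‖ := by
        have : hsmul α₁ α₂ n z.val = hsmul α₁ α₂ 1 (hsmul α₁ α₂ (n - 1) z.val) := by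
          rw [← hsmul_add]; norm_num
        rw [this]
        calc d = d * 1 := (mul_one d).symm
          _ ≤ d * ‖hsmul α₁ α₂ (n - 1) z.val‖ :=
            mul_le_mul_of_nonneg_left hprev'.le hd0.le
          _ ≤ _ := lower_one _
      show (n +ᵥ z).val ∈ S'
      rw [vadd_val]
      exact ⟨by simpa [Metric.mem_closedBall] using hn, hdle⟩
    -- the quotient is the image of the compact set K
    have hsurj : Quot.mk (hopfRel α₁ α₂) '' K = Set.univ := by
      rw [Set.eq_univ_iff_forall]
      intro q
      obtain ⟨z, rfl⟩ := Quot.exists_rep q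
      obtain ⟨n, hn⟩ := hmeets z
      refine ⟨n +ᵥ z, hn, ?_⟩
      exact (Quot.sound ⟨n, rfl⟩).symm
    exact ⟨by rw [← hsurj]; exact hKcomp.image continuous_quot_mk⟩
  · -- Hausdorff
    rw [rel_eq]
    letI : LocallyCompactSpace M := by
      have : IsOpen {z : ℂ × ℂ | z ≠ 0} := isOpen_ne
      exact this.locallyCompactSpace
    exact t2Space_of_properlyDiscontinuousVAdd_of_t2Space (Γ := ℤ) (T := M)
end

section
/- Let α₁, α₂ ∈ ℂ with 0 < |α₁| < 1 and 0 < |α₂| < 1, and let M = ℂ² \ {(0,0)} with the ℤ-action n · (z₁, z₂) = (α₁ⁿ z₁, α₂ⁿ z₂). The quotient topological space M/ℤ is homeomorphic to S¹ × S³, where S¹ is the unit circle in ℂ and S³ is the unit sphere in ℂ². -/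
open Complex

noncomputable section HopfAux

/-- Real-parameter flow `t ↦ α^t` via the principal logarithm. -/
def hopfE (α : ℂ) (t : ℝ) : ℂ := Complex.exp (Complex.log α * t)

lemma hopfE_continuous (α : ℂ) : Continuous (hopfE α) := by
  unfold hopfE; fun_prop

lemma hopfE_ne_zero (α : ℂ) (t : ℝ) : hopfE α t ≠ 0 := Complex.exp_ne_zero _

lemma hopfE_abs (α : ℂ) (hα : α ≠ 0) (t : ℝ) :
    ‖hopfE α t‖ = ‖α‖ ^ t := by
  rw [hopfE, Complex.norm_exp, Real.rpow_def_of_pos (norm_pos_iff.mpr hα)]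
  congr 1
  simp [Complex.log_re]

lemma hopfE_add (α : ℂ) (s t : ℝ) : hopfE α (s + t) = hopfE α s * hopfE α t := by
  rw [hopfE, hopfE, hopfE, ← Complex.exp_add]
  push_cast
  ring_nf

lemma hopfE_int (α : ℂ) (hα : α ≠ 0) (n : ℤ) : hopfE α (n : ℝ) = α ^ n := by
  rw [hopfE]
  push_cast
  rw [mul_comm, Complex.exp_int_mul, Complex.exp_log hα]

/-- The squared norm along the flow. -/
def hopfN (α₁ α₂ : ℂ) (z : ℂ × ℂ) (t : ℝ) : ℝ :=
  ‖hopfE α₁ t * z.1‖ ^ 2 + ‖hopfE α₂ t * z.2‖ ^ 2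

lemma hopfN_continuous (α₁ α₂ : ℂ) :
    Continuous fun p : (ℂ × ℂ) × ℝ => hopfN α₁ α₂ p.1 p.2 := by
  unfold hopfN
  apply Continuous.add
  · exact (continuous_norm.comp
      (((hopfE_continuous α₁).comp continuous_snd).mul (continuous_fst.fst))).pow 2
  · exact (continuous_norm.comp
      (((hopfE_continuous α₂).comp continuous_snd).mul (continuous_fst.snd))).pow 2

end HopfAux

section HopfAux2
open Filter Topology

lemma hopf_term_le {r a : ℝ} {s t : ℝ} (hr0 : 0 < r) (hr1 : r < 1) (ha : 0 ≤ a)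
    (hst : s < t) : (r ^ t * a) ^ 2 ≤ (r ^ s * a) ^ 2 := by
  have h := (Real.rpow_lt_rpow_of_exponent_gt hr0 hr1 hst).le
  have h0 : (0:ℝ) ≤ r ^ t := (Real.rpow_pos_of_pos hr0 t).le
  nlinarith [mul_le_mul_of_nonneg_right h ha, mul_nonneg h0 ha]

lemma hopf_term_lt {r a : ℝ} {s t : ℝ} (hr0 : 0 < r) (hr1 : r < 1) (ha : 0 < a)
    (hst : s < t) : (r ^ t * a) ^ 2 < (r ^ s * a) ^ 2 := by
  have h := Real.rpow_lt_rpow_of_exponent_gt hr0 hr1 hst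
  have h0 : (0:ℝ) < r ^ t := Real.rpow_pos_of_pos hr0 t
  nlinarith [mul_lt_mul_of_pos_right h ha, mul_pos h0 ha]

lemma hopfN_eq (α₁ α₂ : ℂ) (hα₁ : α₁ ≠ 0) (hα₂ : α₂ ≠ 0) (z : ℂ × ℂ) (t : ℝ) :
    hopfN α₁ α₂ z t = (‖α₁‖ ^ t * ‖z.1‖) ^ 2
      + (‖α₂‖ ^ t * ‖z.2‖) ^ 2 := by
  rw [hopfN, norm_mul, norm_mul, hopfE_abs _ hα₁, hopfE_abs _ hα₂]

lemma hopfN_strictAnti (α₁ α₂ : ℂ)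
    (h₁ : 0 < ‖α₁‖) (h₁' : ‖α₁‖ < 1)
    (h₂ : 0 < ‖α₂‖) (h₂' : ‖α₂‖ < 1)
    (z : ℂ × ℂ) (hz : z ≠ 0) : StrictAnti (hopfN α₁ α₂ z) := by
  have hα₁ : α₁ ≠ 0 := fun h => by simp [h] at h₁
  have hα₂ : α₂ ≠ 0 := fun h => by simp [h] at h₂
  intro s t hst
  rw [hopfN_eq _ _ hα₁ hα₂, hopfN_eq _ _ hα₁ hα₂]
  have hz' : z.1 ≠ 0 ∨ z.2 ≠ 0 := by
    by_contra hc
    push_neg at hc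
    exact hz (Prod.ext_iff.mpr (by simp [hc.1, hc.2]))
  rcases hz' with h | h
  · exact add_lt_add_of_lt_of_le
      (hopf_term_lt h₁ h₁' ((norm_pos_iff.mpr h)) hst)
      (hopf_term_le h₂ h₂' (norm_nonneg _) hst)
  · exact add_lt_add_of_le_of_lt
      (hopf_term_le h₁ h₁' (norm_nonneg _) hst)
      (hopf_term_lt h₂ h₂' ((norm_pos_iff.mpr h)) hst)

lemma hopfN_exists (α₁ α₂ : ℂ)
    (h₁ : 0 < ‖α₁‖) (h₁' : ‖α₁‖ < 1)
    (h₂ : 0 < ‖α₂‖) (h₂' : ‖α₂‖ < 1)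
    (z : ℂ × ℂ) (hz : z ≠ 0) : ∃ t, hopfN α₁ α₂ z t = 1 := by
  have hα₁ : α₁ ≠ 0 := fun h => by simp [h] at h₁
  have hα₂ : α₂ ≠ 0 := fun h => by simp [h] at h₂
  -- N tends to 0 at +∞
  have htop : Tendsto (hopfN α₁ α₂ z) atTop (𝓝 0) := by
    have e1 : Tendsto (fun t : ℝ => (‖α₁‖ ^ t * ‖z.1‖) ^ 2) atTop (𝓝 0) := by
      have := (tendsto_rpow_atTop_of_base_lt_one _ (by linarith) h₁').mul_const (‖z.1‖)
      simpa using (this.pow 2)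
    have e2 : Tendsto (fun t : ℝ => (‖α₂‖ ^ t * ‖z.2‖) ^ 2) atTop (𝓝 0) := by
      have := (tendsto_rpow_atTop_of_base_lt_one _ (by linarith) h₂').mul_const (‖z.2‖)
      simpa using (this.pow 2)
    have := e1.add e2
    simp only [add_zero] at this
    refine this.congr fun t => ?_
    rw [hopfN_eq _ _ hα₁ hα₂]
  -- N tends to +∞ at -∞
  have hbot : Tendsto (hopfN α₁ α₂ z) atBot atTop := by
    have hz' : z.1 ≠ 0 ∨ z.2 ≠ 0 := by
      by_contra hc
      push_neg at hc
      exact hz (Prod.ext_iff.mpr (by simp [hc.1, hc.2]))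
    rcases hz' with h | h
    · have e1 : Tendsto (fun t : ℝ => (‖α₁‖ ^ t * ‖z.1‖) ^ 2) atBot atTop := by
        have := (tendsto_rpow_atBot_of_base_lt_one _ h₁ h₁').atTop_mul_const ((norm_pos_iff.mpr h))
        exact (tendsto_pow_atTop (n := 2) (by norm_num)).comp this
      refine tendsto_atTop_mono (fun t => ?_) e1
      rw [hopfN_eq _ _ hα₁ hα₂]
      nlinarith [sq_nonneg (‖α₂‖ ^ t * ‖z.2‖)]
    · have e2 : Tendsto (fun t : ℝ => (‖α₂‖ ^ t * ‖z.2‖) ^ 2) atBot atTop := by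
        have := (tendsto_rpow_atBot_of_base_lt_one _ h₂ h₂').atTop_mul_const ((norm_pos_iff.mpr h))
        exact (tendsto_pow_atTop (n := 2) (by norm_num)).comp this
      refine tendsto_atTop_mono (fun t => ?_) e2
      rw [hopfN_eq _ _ hα₁ hα₂]
      nlinarith [sq_nonneg (‖α₁‖ ^ t * ‖z.1‖)]
  obtain ⟨b, hb⟩ := (htop.eventually_lt_const (by norm_num : (0:ℝ) < 1)).exists
  obtain ⟨a, ha⟩ := (hbot.eventually_gt_atTop 1).exists
  have hcont : Continuous (hopfN α₁ α₂ z) := by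
    unfold hopfN
    exact ((continuous_norm.comp ((hopfE_continuous α₁).mul continuous_const)).pow 2).add
      ((continuous_norm.comp ((hopfE_continuous α₂).mul continuous_const)).pow 2)
  have hab : a ≤ b := by
    by_contra hc
    push_neg at hc
    exact absurd (hopfN_strictAnti α₁ α₂ h₁ h₁' h₂ h₂' z hz hc) (by linarith)
  have := intermediate_value_Icc' hab hcont.continuousOn
  obtain ⟨t, _, ht⟩ := this ⟨hb.le, ha.le⟩
  exact ⟨t, ht⟩

end HopfAux2

noncomputable section HopfAux3
open Filter Topology

/-- The unique time at which the flow brings `z` to the unit sphere. -/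
def hopfTau (α₁ α₂ : ℂ) (z : ℂ × ℂ) : ℝ := Classical.epsilon (fun t => hopfN α₁ α₂ z t = 1)

variable {α₁ α₂ : ℂ}

lemma hopfTau_spec (h₁ : 0 < ‖α₁‖) (h₁' : ‖α₁‖ < 1)
    (h₂ : 0 < ‖α₂‖) (h₂' : ‖α₂‖ < 1)
    {z : ℂ × ℂ} (hz : z ≠ 0) : hopfN α₁ α₂ z (hopfTau α₁ α₂ z) = 1 :=
  Classical.epsilon_spec (hopfN_exists α₁ α₂ h₁ h₁' h₂ h₂' z hz)

lemma hopfTau_eq (h₁ : 0 < ‖α₁‖) (h₁' : ‖α₁‖ < 1)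
    (h₂ : 0 < ‖α₂‖) (h₂' : ‖α₂‖ < 1)
    {z : ℂ × ℂ} (hz : z ≠ 0) {t : ℝ} (h : hopfN α₁ α₂ z t = 1) : hopfTau α₁ α₂ z = t :=
  (hopfN_strictAnti α₁ α₂ h₁ h₁' h₂ h₂' z hz).injective
    (by rw [hopfTau_spec h₁ h₁' h₂ h₂' hz, h])

lemma hopfN_shift (hα₁ : α₁ ≠ 0) (hα₂ : α₂ ≠ 0) (z : ℂ × ℂ) (n : ℤ) (t : ℝ) :
    hopfN α₁ α₂ (α₁ ^ n * z.1, α₂ ^ n * z.2) t = hopfN α₁ α₂ z (t + n) := by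
  have e1 : hopfE α₁ (t + (n : ℝ)) * z.1 = hopfE α₁ t * (α₁ ^ n * z.1) := by
    rw [hopfE_add, hopfE_int _ hα₁]; ring
  have e2 : hopfE α₂ (t + (n : ℝ)) * z.2 = hopfE α₂ t * (α₂ ^ n * z.2) := by
    rw [hopfE_add, hopfE_int _ hα₂]; ring
  rw [hopfN, hopfN, e1, e2]

lemma hopf_shift_ne_zero (hα₁ : α₁ ≠ 0) (hα₂ : α₂ ≠ 0) {z : ℂ × ℂ} (hz : z ≠ 0) (n : ℤ) :
    ((α₁ ^ n * z.1, α₂ ^ n * z.2) : ℂ × ℂ) ≠ 0 := by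
  intro h
  rw [Prod.ext_iff] at h
  simp only [Prod.fst_zero, Prod.snd_zero, mul_eq_zero] at h
  have hz1 : z.1 = 0 := h.1.resolve_left (zpow_ne_zero n hα₁)
  have hz2 : z.2 = 0 := h.2.resolve_left (zpow_ne_zero n hα₂)
  exact hz (Prod.ext_iff.mpr (by simp [hz1, hz2]))

lemma hopfTau_shift (h₁ : 0 < ‖α₁‖) (h₁' : ‖α₁‖ < 1)
    (h₂ : 0 < ‖α₂‖) (h₂' : ‖α₂‖ < 1)
    {z : ℂ × ℂ} (hz : z ≠ 0) (n : ℤ) :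
    hopfTau α₁ α₂ (α₁ ^ n * z.1, α₂ ^ n * z.2) = hopfTau α₁ α₂ z - n := by
  have hα₁ : α₁ ≠ 0 := fun h => by simp [h] at h₁
  have hα₂ : α₂ ≠ 0 := fun h => by simp [h] at h₂
  refine hopfTau_eq h₁ h₁' h₂ h₂' (hopf_shift_ne_zero hα₁ hα₂ hz n) ?_
  rw [hopfN_shift hα₁ hα₂, sub_add_cancel]
  exact hopfTau_spec h₁ h₁' h₂ h₂' hz

lemma hopfTau_continuous (h₁ : 0 < ‖α₁‖) (h₁' : ‖α₁‖ < 1)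
    (h₂ : 0 < ‖α₂‖) (h₂' : ‖α₂‖ < 1) :
    Continuous fun z : {z : ℂ × ℂ // z ≠ 0} => hopfTau α₁ α₂ z.val := by
  have hc : ∀ c : ℝ, Continuous fun z : {z : ℂ × ℂ // z ≠ 0} => hopfN α₁ α₂ z.val c := by
    intro c
    unfold hopfN
    exact ((continuous_norm.comp
        (continuous_const.mul (continuous_subtype_val.fst))).pow 2).add
      ((continuous_norm.comp
        (continuous_const.mul (continuous_subtype_val.snd))).pow 2)
  rw [continuous_iff_continuousAt]
  intro z₀
  rw [ContinuousAt, Metric.tendsto_nhds]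
  intro ε hε
  set t₀ := hopfTau α₁ α₂ z₀.val with ht₀
  have hanti := hopfN_strictAnti α₁ α₂ h₁ h₁' h₂ h₂' z₀.val z₀.prop
  have hspec₀ := hopfTau_spec h₁ h₁' h₂ h₂' z₀.prop
  have hlt : hopfN α₁ α₂ z₀.val (t₀ + ε) < 1 := by
    rw [← hspec₀]; exact hanti (by linarith)
  have hgt : 1 < hopfN α₁ α₂ z₀.val (t₀ - ε) := by
    rw [← hspec₀]; exact hanti (by linarith)
  have h1 : ∀ᶠ z : {z : ℂ × ℂ // z ≠ 0} in 𝓝 z₀, hopfN α₁ α₂ z.val (t₀ + ε) < 1 :=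
    Filter.Tendsto.eventually_lt_const hlt ((hc (t₀ + ε)).tendsto z₀)
  have h2 : ∀ᶠ z : {z : ℂ × ℂ // z ≠ 0} in 𝓝 z₀, 1 < hopfN α₁ α₂ z.val (t₀ - ε) :=
    Filter.Tendsto.eventually_const_lt hgt ((hc (t₀ - ε)).tendsto z₀)
  filter_upwards [h1, h2] with z hz1 hz2
  have hanti' := hopfN_strictAnti α₁ α₂ h₁ h₁' h₂ h₂' z.val z.prop
  have hspec := hopfTau_spec h₁ h₁' h₂ h₂' z.prop
  rw [Real.dist_eq, abs_lt]
  constructor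
  · -- t₀ - ε < τ z
    by_contra hcon
    push_neg at hcon
    have : hopfN α₁ α₂ z.val (t₀ - ε) ≤ hopfN α₁ α₂ z.val (hopfTau α₁ α₂ z.val) :=
      hanti'.antitone (by linarith)
    rw [hspec] at this
    linarith
  · by_contra hcon
    push_neg at hcon
    have : hopfN α₁ α₂ z.val (hopfTau α₁ α₂ z.val) ≤ hopfN α₁ α₂ z.val (t₀ + ε) :=
      hanti'.antitone (by linarith)
    rw [hspec] at this
    linarith

end HopfAux3

noncomputable section HopfMain
open Filter Topology

lemma hopfE_zero (α : ℂ) : hopfE α 0 = 1 := by simp [hopfE]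

lemma hopf_sphere_mem {a b : ℂ} (h : ‖a‖ ^ 2 + ‖b‖ ^ 2 = 1) :
    (WithLp.equiv 2 (Fin 2 → ℂ)).symm ![a, b] ∈ Metric.sphere (0 : EuclideanSpace ℂ (Fin 2)) 1 := by
  rw [mem_sphere_zero_iff_norm, EuclideanSpace.norm_eq, Fin.sum_univ_two]
  simp only [WithLp.equiv_symm_apply, PiLp.toLp_apply, Matrix.cons_val_zero, Matrix.cons_val_one,
    Matrix.head_cons]
  rw [h, Real.sqrt_one]

lemma hopf_sphere_coords {s : EuclideanSpace ℂ (Fin 2)}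
    (hs : s ∈ Metric.sphere (0 : EuclideanSpace ℂ (Fin 2)) 1) :
    ‖s 0‖ ^ 2 + ‖s 1‖ ^ 2 = 1 := by
  rw [mem_sphere_zero_iff_norm, EuclideanSpace.norm_eq, Fin.sum_univ_two] at hs
  have h := Real.sqrt_eq_one.mp hs
  simpa using h

variable {α₁ α₂ : ℂ}

lemma hopf_point_ne_zero (α₁ α₂ : ℂ) (t : ℝ) {s : EuclideanSpace ℂ (Fin 2)}
    (hs : s ∈ Metric.sphere (0 : EuclideanSpace ℂ (Fin 2)) 1) :
    ((hopfE α₁ (-t) * s 0, hopfE α₂ (-t) * s 1) : ℂ × ℂ) ≠ 0 := by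
  intro h
  rw [Prod.ext_iff] at h
  simp only [Prod.fst_zero, Prod.snd_zero, mul_eq_zero] at h
  have h0 : s 0 = 0 := h.1.resolve_left (hopfE_ne_zero α₁ (-t))
  have h1 : s 1 = 0 := h.2.resolve_left (hopfE_ne_zero α₂ (-t))
  have := hopf_sphere_coords hs
  rw [h0, h1] at this
  simp at this

/-- The map `M → S¹ × S³` inducing the homeomorphism. -/
def hopfF (h₁ : 0 < ‖α₁‖) (h₁' : ‖α₁‖ < 1)
    (h₂ : 0 < ‖α₂‖) (h₂' : ‖α₂‖ < 1)
    (z : {z : ℂ × ℂ // z ≠ 0}) :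
    Metric.sphere (0 : ℂ) 1 × Metric.sphere (0 : EuclideanSpace ℂ (Fin 2)) 1 :=
  (⟨Complex.exp ((2 * Real.pi * hopfTau α₁ α₂ z.val : ℝ) * Complex.I), by
      rw [mem_sphere_zero_iff_norm, Complex.norm_exp_ofReal_mul_I]⟩,
   ⟨(WithLp.equiv 2 (Fin 2 → ℂ)).symm
      ![hopfE α₁ (hopfTau α₁ α₂ z.val) * z.val.1, hopfE α₂ (hopfTau α₁ α₂ z.val) * z.val.2], by
      apply hopf_sphere_mem
      have := hopfTau_spec h₁ h₁' h₂ h₂' z.prop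
      rw [hopfN] at this
      rw [norm_mul, norm_mul]
      rw [norm_mul, norm_mul] at this
      exact this⟩)

lemma hopfF_continuous (h₁ : 0 < ‖α₁‖) (h₁' : ‖α₁‖ < 1)
    (h₂ : 0 < ‖α₂‖) (h₂' : ‖α₂‖ < 1) :
    Continuous (hopfF h₁ h₁' h₂ h₂') := by
  have τc := hopfTau_continuous h₁ h₁' h₂ h₂'
  apply Continuous.prodMk
  · apply Continuous.subtype_mk
    exact Complex.continuous_exp.comp
      ((Complex.continuous_ofReal.comp (continuous_const.mul τc)).mul continuous_const)
  · apply Continuous.subtype_mk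
    refine (PiLp.continuous_toLp 2 (fun _ : Fin 2 => ℂ)).comp ?_
    refine continuous_pi fun i => ?_
    fin_cases i
    · exact (((hopfE_continuous α₁).comp τc).mul continuous_subtype_val.fst)
    · exact (((hopfE_continuous α₂).comp τc).mul continuous_subtype_val.snd)

lemma hopfF_sound (h₁ : 0 < ‖α₁‖) (h₁' : ‖α₁‖ < 1)
    (h₂ : 0 < ‖α₂‖) (h₂' : ‖α₂‖ < 1)
    (z w : {z : ℂ × ℂ // z ≠ 0}) (h : hopfRel α₁ α₂ z w) :
    hopfF h₁ h₁' h₂ h₂' z = hopfF h₁ h₁' h₂ h₂' w := by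
  have hα₁ : α₁ ≠ 0 := fun h => by simp [h] at h₁
  have hα₂ : α₂ ≠ 0 := fun h => by simp [h] at h₂
  obtain ⟨n, hn⟩ := h
  have hτ : hopfTau α₁ α₂ w.val = hopfTau α₁ α₂ z.val - n := by
    rw [← hn]
    exact hopfTau_shift h₁ h₁' h₂ h₂' z.prop n
  have key : ∀ (α : ℂ), α ≠ 0 → ∀ t : ℝ,
      hopfE α (t - (n : ℝ)) * α ^ n = hopfE α t := by
    intro α hα t
    rw [← hopfE_int _ hα n, ← hopfE_add, sub_add_cancel]
  have hw1 : w.val.1 = α₁ ^ n * z.val.1 := by rw [← hn]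
  have hw2 : w.val.2 = α₂ ^ n * z.val.2 := by rw [← hn]
  have c1 : hopfE α₁ (hopfTau α₁ α₂ w.val) * w.val.1
      = hopfE α₁ (hopfTau α₁ α₂ z.val) * z.val.1 := by
    rw [hτ, hw1, ← mul_assoc, key α₁ hα₁]
  have c2 : hopfE α₂ (hopfTau α₁ α₂ w.val) * w.val.2
      = hopfE α₂ (hopfTau α₁ α₂ z.val) * z.val.2 := by
    rw [hτ, hw2, ← mul_assoc, key α₂ hα₂]
  refine Prod.ext_iff.mpr ⟨Subtype.ext ?_, Subtype.ext ?_⟩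
  · show Complex.exp _ = Complex.exp _
    rw [Complex.exp_eq_exp_iff_exists_int]
    exact ⟨n, by rw [hτ]; push_cast; ring⟩
  · show (WithLp.equiv 2 (Fin 2 → ℂ)).symm _ = (WithLp.equiv 2 (Fin 2 → ℂ)).symm _
    rw [c1, c2]

lemma hopfF_injective (h₁ : 0 < ‖α₁‖) (h₁' : ‖α₁‖ < 1)
    (h₂ : 0 < ‖α₂‖) (h₂' : ‖α₂‖ < 1)
    (z w : {z : ℂ × ℂ // z ≠ 0}) (h : hopfF h₁ h₁' h₂ h₂' z = hopfF h₁ h₁' h₂ h₂' w) :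
    hopfRel α₁ α₂ z w := by
  have hα₁ : α₁ ≠ 0 := fun h => by simp [h] at h₁
  have hα₂ : α₂ ≠ 0 := fun h => by simp [h] at h₂
  obtain ⟨ha, hb⟩ := Prod.ext_iff.mp h
  rw [Subtype.ext_iff] at ha hb
  rw [hopfF, hopfF] at ha hb
  simp only at ha hb
  rw [Complex.exp_eq_exp_iff_exists_int] at ha
  obtain ⟨m, hm⟩ := ha
  have hm2 : ((2 * Real.pi * hopfTau α₁ α₂ z.val : ℝ) : ℂ)
      = ((2 * Real.pi * (hopfTau α₁ α₂ w.val + m) : ℝ) : ℂ) :=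
    mul_right_cancel₀ Complex.I_ne_zero (hm.trans (by push_cast; ring))
  have hre : 2 * Real.pi * hopfTau α₁ α₂ z.val
      = 2 * Real.pi * (hopfTau α₁ α₂ w.val + m) := Complex.ofReal_inj.mp hm2
  have hτ : hopfTau α₁ α₂ z.val = hopfTau α₁ α₂ w.val + m :=
    mul_left_cancel₀ (by positivity : (2 * Real.pi : ℝ) ≠ 0) hre
  have hv := (WithLp.equiv 2 (Fin 2 → ℂ)).symm.injective hb
  have hv0 : hopfE α₁ (hopfTau α₁ α₂ z.val) * z.val.1
      = hopfE α₁ (hopfTau α₁ α₂ w.val) * w.val.1 := by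
    simpa using congrFun hv 0
  have hv1 : hopfE α₂ (hopfTau α₁ α₂ z.val) * z.val.2
      = hopfE α₂ (hopfTau α₁ α₂ w.val) * w.val.2 := by
    simpa using congrFun hv 1
  refine ⟨m, Prod.ext_iff.mpr ⟨?_, ?_⟩⟩
  · apply mul_left_cancel₀ (hopfE_ne_zero α₁ (hopfTau α₁ α₂ w.val))
    calc hopfE α₁ (hopfTau α₁ α₂ w.val) * (α₁ ^ m * z.val.1)
        = (hopfE α₁ (hopfTau α₁ α₂ w.val) * hopfE α₁ (m : ℝ)) * z.val.1 := by
          rw [hopfE_int _ hα₁]; ring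
      _ = hopfE α₁ (hopfTau α₁ α₂ z.val) * z.val.1 := by rw [← hopfE_add, ← hτ]
      _ = hopfE α₁ (hopfTau α₁ α₂ w.val) * w.val.1 := hv0
  · apply mul_left_cancel₀ (hopfE_ne_zero α₂ (hopfTau α₁ α₂ w.val))
    calc hopfE α₂ (hopfTau α₁ α₂ w.val) * (α₂ ^ m * z.val.2)
        = (hopfE α₂ (hopfTau α₁ α₂ w.val) * hopfE α₂ (m : ℝ)) * z.val.2 := by
          rw [hopfE_int _ hα₂]; ring
      _ = hopfE α₂ (hopfTau α₁ α₂ z.val) * z.val.2 := by rw [← hopfE_add, ← hτ]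
      _ = hopfE α₂ (hopfTau α₁ α₂ w.val) * w.val.2 := hv1

end HopfMain

noncomputable section HopfMain2
open Filter Topology

variable {α₁ α₂ : ℂ}

lemma hopfF_surjective (h₁ : 0 < ‖α₁‖) (h₁' : ‖α₁‖ < 1)
    (h₂ : 0 < ‖α₂‖) (h₂' : ‖α₂‖ < 1) :
    Function.Surjective (hopfF h₁ h₁' h₂ h₂') := by
  rintro ⟨u, s⟩
  have hu : ‖u.val‖ = 1 := by
    have := mem_sphere_zero_iff_norm.mp u.prop
    exact this
  set t : ℝ := u.val.arg / (2 * Real.pi) with ht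
  have hπ : (2 * Real.pi : ℝ) ≠ 0 := by positivity
  have hut : Complex.exp ((2 * Real.pi * t : ℝ) * Complex.I) = u.val := by
    have h2 : (2 * Real.pi * t : ℝ) = u.val.arg := by
      rw [ht]; field_simp
    rw [h2]
    have h3 := Complex.norm_mul_exp_arg_mul_I u.val
    rwa [hu, Complex.ofReal_one, one_mul] at h3
  have hs := hopf_sphere_coords s.prop
  set z : ℂ × ℂ := (hopfE α₁ (-t) * s.val 0, hopfE α₂ (-t) * s.val 1) with hzdef
  have hzne : z ≠ 0 := hopf_point_ne_zero α₁ α₂ t s.prop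
  have hcancel : ∀ (α : ℂ) (c : ℂ), hopfE α t * (hopfE α (-t) * c) = c := by
    intro α c
    rw [← mul_assoc, ← hopfE_add, add_neg_cancel, hopfE_zero, one_mul]
  have hNz : hopfN α₁ α₂ z t = 1 := by
    rw [hopfN, hzdef]
    simp only [hcancel]
    exact hs
  have hτz : hopfTau α₁ α₂ z = t := hopfTau_eq h₁ h₁' h₂ h₂' hzne hNz
  refine ⟨⟨z, hzne⟩, Prod.ext_iff.mpr ⟨Subtype.ext ?_, Subtype.ext ?_⟩⟩
  · show Complex.exp _ = u.val
    rw [show hopfTau α₁ α₂ (⟨z, hzne⟩ : {z : ℂ × ℂ // z ≠ 0}).val = t from hτz]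
    exact hut
  · show (WithLp.equiv 2 (Fin 2 → ℂ)).symm _ = s.val
    have hsval : s.val = (WithLp.equiv 2 (Fin 2 → ℂ)).symm ![s.val 0, s.val 1] := by
      ext i
      fin_cases i <;> rfl
    rw [show hopfTau α₁ α₂ (⟨z, hzne⟩ : {z : ℂ × ℂ // z ≠ 0}).val = t from hτz]
    conv_rhs => rw [hsval]
    congr 1
    rw [show (⟨z, hzne⟩ : {z : ℂ × ℂ // z ≠ 0}).val = z from rfl, hzdef]
    simp only [hcancel]

lemma hopf_compact (h₁ : 0 < ‖α₁‖) (h₁' : ‖α₁‖ < 1)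
    (h₂ : 0 < ‖α₂‖) (h₂' : ‖α₂‖ < 1) :
    CompactSpace (Quot (hopfRel α₁ α₂)) := by
  have hα₁ : α₁ ≠ 0 := fun h => by simp [h] at h₁
  have hα₂ : α₂ ≠ 0 := fun h => by simp [h] at h₂
  set G : ℝ × (Metric.sphere (0 : EuclideanSpace ℂ (Fin 2)) 1) → Quot (hopfRel α₁ α₂) :=
    fun p => Quot.mk (hopfRel α₁ α₂)
      ⟨(hopfE α₁ (-p.1) * p.2.val 0, hopfE α₂ (-p.1) * p.2.val 1),
        hopf_point_ne_zero α₁ α₂ p.1 p.2.prop⟩ with hG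
  have hGc : Continuous G := by
    apply continuous_quot_mk.comp
    apply Continuous.subtype_mk
    apply Continuous.prodMk
    · exact ((hopfE_continuous α₁).comp continuous_fst.neg).mul
        ((continuous_apply (0 : Fin 2)).comp ((PiLp.continuous_ofLp 2 _).comp (continuous_subtype_val.comp continuous_snd)))
    · exact ((hopfE_continuous α₂).comp continuous_fst.neg).mul
        ((continuous_apply (1 : Fin 2)).comp ((PiLp.continuous_ofLp 2 _).comp (continuous_subtype_val.comp continuous_snd)))
  have huniv : (Set.univ : Set (Quot (hopfRel α₁ α₂)))
      = G '' (Set.Icc (0 : ℝ) 1 ×ˢ Set.univ) := by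
    refine Set.eq_of_subset_of_subset ?_ (Set.subset_univ _)
    intro q _
    refine Quot.ind (fun z => ?_) q
    set τ := hopfTau α₁ α₂ z.val with hτdef
    set t : ℝ := Int.fract τ with htdef
    set n : ℤ := ⌊τ⌋ with hndef
    have hmem : (WithLp.equiv 2 (Fin 2 → ℂ)).symm
        ![hopfE α₁ τ * z.val.1, hopfE α₂ τ * z.val.2]
        ∈ Metric.sphere (0 : EuclideanSpace ℂ (Fin 2)) 1 := by
      apply hopf_sphere_mem
      have := hopfTau_spec h₁ h₁' h₂ h₂' z.prop
      rw [hopfN, norm_mul, norm_mul] at this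
      rw [norm_mul, norm_mul]
      exact this
    refine ⟨(t, ⟨_, hmem⟩), ⟨⟨Int.fract_nonneg τ, (Int.fract_lt_one τ).le⟩, trivial⟩, ?_⟩
    have hcoord0 : ((WithLp.equiv 2 (Fin 2 → ℂ)).symm
        ![hopfE α₁ τ * z.val.1, hopfE α₂ τ * z.val.2]) 0 = hopfE α₁ τ * z.val.1 := rfl
    have hcoord1 : ((WithLp.equiv 2 (Fin 2 → ℂ)).symm
        ![hopfE α₁ τ * z.val.1, hopfE α₂ τ * z.val.2]) 1 = hopfE α₂ τ * z.val.2 := rfl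
    have hkey : ∀ α : ℂ, α ≠ 0 → ∀ c : ℂ,
        hopfE α (-t) * (hopfE α τ * c) = α ^ n * c := by
      intro α hα c
      rw [← mul_assoc, ← hopfE_add]
      rw [show -t + τ = (n : ℝ) by rw [htdef, hndef]; rw [neg_add_eq_sub, Int.self_sub_fract]]
      rw [hopfE_int _ hα]
    have heq : G (t, ⟨_, hmem⟩) = Quot.mk (hopfRel α₁ α₂)
        ⟨(α₁ ^ n * z.val.1, α₂ ^ n * z.val.2), hopf_shift_ne_zero hα₁ hα₂ z.prop n⟩ := by
      show Quot.mk _ _ = Quot.mk _ _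
      congr 1
      apply Subtype.ext
      dsimp only
      rw [hcoord0, hcoord1, hkey α₁ hα₁, hkey α₂ hα₂]
    rw [heq]
    exact (Quot.sound ⟨n, rfl⟩).symm
  refine ⟨?_⟩
  rw [huniv]
  exact (isCompact_Icc.prod isCompact_univ).image hGc

end HopfMain2


/-- For `0 < |α₁| < 1` and `0 < |α₂| < 1`, the quotient topological
space `M/ℤ` is homeomorphic to `S¹ × S³`, where `S¹` is the unit circle in `ℂ`
and `S³` is the unit sphere in `ℂ²`. -/
theorem hopf_quotient_homeomorph_s1_s3
    (α₁ α₂ : ℂ)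
    (h₁ : 0 < ‖α₁‖) (h₁' : ‖α₁‖ < 1)
    (h₂ : 0 < ‖α₂‖) (h₂' : ‖α₂‖ < 1) :
    Nonempty (Quot (hopfRel α₁ α₂) ≃ₜ
      (Metric.sphere (0 : ℂ) 1 × Metric.sphere (0 : EuclideanSpace ℂ (Fin 2)) 1)) := by
  haveI : CompactSpace (Quot (hopfRel α₁ α₂)) := hopf_compact h₁ h₁' h₂ h₂'
  set Fbar : Quot (hopfRel α₁ α₂) →
      Metric.sphere (0 : ℂ) 1 × Metric.sphere (0 : EuclideanSpace ℂ (Fin 2)) 1 :=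
    Quot.lift (hopfF h₁ h₁' h₂ h₂') (hopfF_sound h₁ h₁' h₂ h₂') with hFbar
  have hc : Continuous Fbar := continuous_quot_lift _ (hopfF_continuous h₁ h₁' h₂ h₂')
  have hbij : Function.Bijective Fbar := by
    constructor
    · intro a b
      refine Quot.induction_on₂ a b ?_
      intro z w h
      exact Quot.sound (hopfF_injective h₁ h₁' h₂ h₂' z w h)
    · intro y
      obtain ⟨z, hz⟩ := hopfF_surjective h₁ h₁' h₂ h₂' y
      exact ⟨Quot.mk _ z, hz⟩
  exact ⟨Continuous.homeoOfEquivCompactToT2 (f := Equiv.ofBijective Fbar hbij) hc⟩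
end
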